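/- Let c₁, ..., c_K be positive reals with max_k cₖ² ≤ 2·min_k cₖ², and let X ∈ ℝ^{K×2} be the design matrix with rows (1, cₖ²) (assumed full column rank), P = I − X(XᵀX)⁻¹Xᵀ. Then ‖Diag(1/c₁, ..., 1/c_K)·P·c‖₂² ≤ K, where c = (c₁, ..., c_K)ᵀ. -/

import Mathlib

open Matrix

/-- Variance-reduction condition `q ≤ K`: if `c₁,...,c_K > 0` with
`max cₖ² ≤ 2 min cₖ²`, `X` is the design matrix with rows `(1, cₖ²)` (full column
rank), and `P = I − X(XᵀX)⁻¹Xᵀ`, then `‖Diag(1/c₁,...,1/c_K) P c‖₂² ≤ K`. -/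
theorem stmt12 (K : ℕ) (c : Fin K → ℝ) (hc : ∀ k, 0 < c k)
    (hminmax : ∀ i j, (c i) ^ 2 ≤ 2 * (c j) ^ 2)
    (X : Matrix (Fin K) (Fin 2) ℝ)
    (hX : X = Matrix.of fun k j => if j = 0 then (1 : ℝ) else (c k) ^ 2)
    (hrank : X.rank = 2) :
    ∑ k, ((c k)⁻¹ *
        (((1 : Matrix (Fin K) (Fin K) ℝ) - X * (Xᵀ * X)⁻¹ * Xᵀ).mulVec c k)) ^ 2
      ≤ (K : ℝ) := by
  classical
  have hrank2 : (Xᵀ * X).rank = 2 := by rw [Matrix.rank_transpose_mul_self]; exact hrank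
  have hUnit : IsUnit (Xᵀ * X) := by
    rw [← Matrix.mulVec_surjective_iff_isUnit]
    have : LinearMap.range (Xᵀ * X).mulVecLin = ⊤ := by
      apply Submodule.eq_top_of_finrank_eq
      rw [Module.finrank_fintype_fun_eq_card]
      simpa [Matrix.rank] using hrank2
    intro y
    exact (LinearMap.range_eq_top.mp this) y
  have hdet : IsUnit (Xᵀ * X).det := (Matrix.isUnit_iff_isUnit_det _).mp hUnit
  have hBA : (Xᵀ * X)⁻¹ * (Xᵀ * X) = 1 := Matrix.nonsing_inv_mul _ hdet
  set A : Matrix (Fin 2) (Fin 2) ℝ := (Xᵀ * X)⁻¹ with hA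
  set P : Matrix (Fin K) (Fin K) ℝ := 1 - X * A * Xᵀ with hP
  have hAsymm : Aᵀ = A := by
    rw [hA, Matrix.transpose_nonsing_inv, Matrix.transpose_mul, Matrix.transpose_transpose]
  have hPsymm : Pᵀ = P := by
    rw [hP, Matrix.transpose_sub, Matrix.transpose_one, Matrix.transpose_mul,
      Matrix.transpose_mul, Matrix.transpose_transpose, hAsymm, Matrix.mul_assoc]
  have hPX : P * X = 0 := by
    rw [hP, Matrix.sub_mul, Matrix.one_mul, Matrix.mul_assoc, Matrix.mul_assoc, hBA,
      Matrix.mul_one, sub_self]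
  have hPP : P * P = P := by
    have h1 : P * (1 - X * A * Xᵀ) = P - (P * X) * (A * Xᵀ) := by
      rw [Matrix.mul_sub, Matrix.mul_one, Matrix.mul_assoc, Matrix.mul_assoc]
    rw [← hP] at h1
    rw [h1, hPX]
    simp
  have hK : 0 < K := by
    rcases Nat.eq_zero_or_pos K with h | h
    · subst h
      have h2 := Matrix.rank_le_card_height X
      rw [hrank] at h2
      simp at h2
    · exact h
  haveI : Nonempty (Fin K) := ⟨⟨0, hK⟩⟩
  obtain ⟨k₀, -, hk₀⟩ := Finset.exists_min_image Finset.univ c ⟨⟨0, hK⟩, Finset.mem_univ _⟩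
  have hk₀' : ∀ k, c k₀ ≤ c k := fun k => hk₀ k (Finset.mem_univ k)
  set w : Fin K → ℝ := fun k => c k - c k₀ with hw
  -- P w = P c
  have hPw : P *ᵥ w = P *ᵥ c := by
    have hX0 : ∀ k, X k 0 = 1 := by intro k; rw [hX]; simp
    have hX1 : ∀ k, X k 1 = c k ^ 2 := by intro k; rw [hX]; simp
    have hwc : w = c - X *ᵥ ![c k₀, 0] := by
      funext k
      simp only [hw, Pi.sub_apply, Matrix.mulVec, dotProduct, Fin.sum_univ_two,
        hX0, hX1, Matrix.cons_val_zero, Matrix.cons_val_one, Matrix.head_cons]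
      ring
    rw [hwc, Matrix.mulVec_sub, Matrix.mulVec_mulVec, hPX]
    simp
  -- self-adjointness swap
  have hswap : ∀ a b : Fin K → ℝ, (P *ᵥ a) ⬝ᵥ b = a ⬝ᵥ (P *ᵥ b) := by
    intro a b
    calc (P *ᵥ a) ⬝ᵥ b = b ⬝ᵥ (P *ᵥ a) := dotProduct_comm _ _
      _ = (b ᵥ* P) ⬝ᵥ a := Matrix.dotProduct_mulVec _ _ _
      _ = (Pᵀ *ᵥ b) ⬝ᵥ a := by rw [Matrix.mulVec_transpose]
      _ = (P *ᵥ b) ⬝ᵥ a := by rw [hPsymm]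
      _ = a ⬝ᵥ (P *ᵥ b) := dotProduct_comm _ _
  have hwu : w ⬝ᵥ (P *ᵥ c) = (P *ᵥ c) ⬝ᵥ (P *ᵥ c) := by
    calc w ⬝ᵥ (P *ᵥ c) = w ⬝ᵥ (P *ᵥ w) := by rw [hPw]
      _ = w ⬝ᵥ (P *ᵥ (P *ᵥ w)) := by rw [Matrix.mulVec_mulVec, hPP]
      _ = (P *ᵥ w) ⬝ᵥ (P *ᵥ w) := (hswap w (P *ᵥ w)).symm
      _ = (P *ᵥ c) ⬝ᵥ (P *ᵥ c) := by rw [hPw]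
  have hnorm : (P *ᵥ c) ⬝ᵥ (P *ᵥ c) ≤ w ⬝ᵥ w := by
    set u := P *ᵥ c with hu
    have h0 : (0:ℝ) ≤ ∑ k, (w k - u k)^2 := Finset.sum_nonneg fun k _ => sq_nonneg _
    have hexp : ∑ k, (w k - u k)^2 = w ⬝ᵥ w - 2 * (w ⬝ᵥ u) + u ⬝ᵥ u := by
      simp only [dotProduct, Finset.mul_sum, ← Finset.sum_add_distrib,
        ← Finset.sum_sub_distrib]
      exact Finset.sum_congr rfl fun k _ => by ring
    rw [hexp, hwu] at h0
    linarith
  have hterm : ∀ k, (c k - c k₀)^2 ≤ (c k₀)^2 := by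
    intro k
    have h1 := hminmax k k₀
    have h2 := hk₀' k
    have h3 := hc k₀
    nlinarith
  have hc₀ : (0:ℝ) < (c k₀)^2 := pow_pos (hc k₀) 2
  have hww : w ⬝ᵥ w ≤ K * (c k₀)^2 := by
    rw [dotProduct]
    calc ∑ k, w k * w k = ∑ k, (c k - c k₀)^2 := Finset.sum_congr rfl fun k _ => by
          rw [hw]; ring
      _ ≤ ∑ _k : Fin K, (c k₀)^2 := Finset.sum_le_sum fun k _ => hterm k
      _ = K * (c k₀)^2 := by
          rw [Finset.sum_const, Finset.card_univ, Fintype.card_fin, nsmul_eq_mul]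
  calc ∑ k, ((c k)⁻¹ * (P *ᵥ c) k)^2
      ≤ ∑ k, ((P *ᵥ c) k)^2 / (c k₀)^2 := by
        apply Finset.sum_le_sum
        intro k _
        have h1 : (c k₀)^2 ≤ (c k)^2 := by nlinarith [hk₀' k, hc k₀]
        have h2 : ((c k)⁻¹ * (P *ᵥ c) k)^2 = ((P *ᵥ c) k)^2 / (c k)^2 := by
          rw [mul_pow, inv_pow]; ring
        rw [h2]
        exact div_le_div_of_nonneg_left (sq_nonneg _) hc₀ h1
    _ = ((P *ᵥ c) ⬝ᵥ (P *ᵥ c)) / (c k₀)^2 := by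
        rw [dotProduct, ← Finset.sum_div]
        exact congrArg (· / _) (Finset.sum_congr rfl fun k _ => by ring)
    _ ≤ (K * (c k₀)^2) / (c k₀)^2 := by
        gcongr
        exact hnorm.trans hww
    _ = K := by rw [mul_div_assoc, div_self hc₀.ne', mul_one]
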